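/- Let c ≥ 1 and k ∈ ℤ. If Q and Q' are dyadic cubes of side length 2^{-k} (i.e., Q = ∏_{i=1}^n [m_i/2^k, (m_i+1)/2^k] and Q' = ∏_{i=1}^n [m'_i/2^k, (m'_i+1)/2^k] for m, m' ∈ ℤ^n), and the dilation cQ (the cube with the same center as Q and side length c·2^{-k}) intersects Q', then the dilation ⌊c⌋Q also intersects Q'. -/
import Mathlib


open MeasureTheory

noncomputable section

/-- The closed dyadic cube `Q_{k,m} = ∏ᵢ [mᵢ/2ᵏ, (mᵢ+1)/2ᵏ]` in `ℝⁿ`. -/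
def dyadicCube {n : ℕ} (k : ℤ) (m : Fin n → ℤ) : Set (Fin n → ℝ) :=
  {y | ∀ i, (m i : ℝ) / 2 ^ k ≤ y i ∧ y i ≤ ((m i : ℝ) + 1) / 2 ^ k}

/-- The dilation `c·Q_{k,m}`: the cube with the same center as `Q_{k,m}`
and side length `c · 2^{-k}` (in the sup norm). -/
def dilDyadic {n : ℕ} (c : ℝ) (k : ℤ) (m : Fin n → ℤ) : Set (Fin n → ℝ) :=
  {y | ∀ i, |y i - ((m i : ℝ) + 1 / 2) / 2 ^ k| ≤ c * (2 : ℝ) ^ (-k) / 2}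

private lemma key_floor (c : ℝ) (t : ℝ) (ht : 0 < t) (d : ℤ)
    (h : ((d : ℝ) - 1 / 2) * t ≤ c * t / 2) :
    ((d : ℝ) - 1 / 2) * t ≤ (⌊c⌋ : ℝ) * t / 2 := by
  have h1 : 2 * (d : ℝ) - 1 ≤ c := by
    by_contra hcon
    push_neg at hcon
    have := mul_lt_mul_of_pos_right hcon ht
    nlinarith
  have h2 : (2 * d - 1 : ℤ) ≤ ⌊c⌋ := Int.le_floor.mpr (by push_cast; linarith)
  have h3 : 2 * (d : ℝ) - 1 ≤ (⌊c⌋ : ℝ) := by exact_mod_cast h2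
  nlinarith

/-- If `c ≥ 1` and the dilation `cQ` of a dyadic cube `Q` of generation `k`
meets another dyadic cube `Q'` of generation `k`, then `⌊c⌋Q` also meets `Q'`. -/
theorem dilation_floor_intersect {n : ℕ} (c : ℝ) (hc : 1 ≤ c) (k : ℤ)
    (m m' : Fin n → ℤ)
    (h : (dilDyadic c k m ∩ dyadicCube k m').Nonempty) :
    (dilDyadic (⌊c⌋ : ℝ) k m ∩ dyadicCube k m').Nonempty := by
  obtain ⟨y, hy1, hy2⟩ := h
  have hk : (0 : ℝ) < 2 ^ k := zpow_pos (by norm_num) k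
  have ht : (0 : ℝ) < (2 : ℝ) ^ (-k) := zpow_pos (by norm_num) (-k)
  have hfc : (1 : ℝ) ≤ (⌊c⌋ : ℝ) := by
    exact_mod_cast Int.le_floor.mpr (by exact_mod_cast hc)
  refine ⟨fun i => max ((m' i : ℝ) / 2 ^ k)
      (min (((m i : ℝ) + 1 / 2) / 2 ^ k) (((m' i : ℝ) + 1) / 2 ^ k)), ?_, ?_⟩
  · intro i
    have h1 := abs_le.mp (hy1 i)
    have h2 := (hy2 i).1
    have h3 := (hy2 i).2
    set t : ℝ := (2 : ℝ) ^ (-k) with htdef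
    set A : ℝ := (m' i : ℝ) / 2 ^ k with hA
    set B : ℝ := ((m' i : ℝ) + 1) / 2 ^ k with hB
    set X : ℝ := ((m i : ℝ) + 1 / 2) / 2 ^ k with hX
    have hinv : t = (2 ^ k)⁻¹ := by rw [htdef, zpow_neg]
    have hXB : X - B = (((m i - m' i : ℤ) : ℝ) - 1 / 2) * t := by
      rw [hX, hB, hinv]; push_cast; field_simp; ring
    have hAX : A - X = (((m' i - m i : ℤ) : ℝ) - 1 / 2) * t := by
      rw [hA, hX, hinv]; push_cast; field_simp; ring
    have hb1 : X - B ≤ (⌊c⌋ : ℝ) * t / 2 := by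
      rw [hXB]
      apply key_floor c t ht
      rw [← hXB]
      linarith [h1.1]
    have hb2 : A - X ≤ (⌊c⌋ : ℝ) * t / 2 := by
      rw [hAX]
      apply key_floor c t ht
      rw [← hAX]
      linarith [h1.2]
    have hR : (0 : ℝ) ≤ (⌊c⌋ : ℝ) * t / 2 := by positivity
    change |max A (min X B) - X| ≤ (⌊c⌋ : ℝ) * t / 2
    rw [abs_le]
    constructor
    · rcases le_total X B with hxb | hxb
      · have : min X B = X := min_eq_left hxb
        rw [this]
        rcases le_total A X with hax | hax
        · rw [max_eq_right hax]; linarith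
        · rw [max_eq_left hax]; linarith
      · have : min X B = B := min_eq_right hxb
        rw [this]
        rcases le_total A B with hab | hab
        · rw [max_eq_right hab]; linarith
        · rw [max_eq_left hab]; linarith
    · rcases le_total X B with hxb | hxb
      · have : min X B = X := min_eq_left hxb
        rw [this]
        rcases le_total A X with hax | hax
        · rw [max_eq_right hax]; linarith
        · rw [max_eq_left hax]; linarith
      · have : min X B = B := min_eq_right hxb
        rw [this]
        rcases le_total A B with hab | hab
        · rw [max_eq_right hab]; linarith
        · rw [max_eq_left hab]; linarith
  · intro i
    constructor
    · exact le_max_left _ _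
    · apply max_le
      · rw [div_le_div_iff₀ hk hk]
        nlinarith
      · exact min_le_right _ _
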